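/- For symmetric positive definite matrices Q and M of the same size, LogDet(Q, M) ≥ LogDet(Q_vv, M_vv), where Q_vv and M_vv are the leading principal n×n submatrices. -/

import Mathlib

open Matrix

lemma trace_eq_sum_eig {ι : Type*} [Fintype ι] [DecidableEq ι]
    {X : Matrix ι ι ℝ} (hX : X.IsHermitian) :
    X.trace = ∑ i, hX.eigenvalues i := by
  simpa using hX.trace_eq_sum_eigenvalues

lemma posDef_of_psd_unit_det {ι : Type*} [Fintype ι] [DecidableEq ι]
    {X : Matrix ι ι ℝ} (hX : X.PosSemidef) (h : IsUnit X.det) : X.PosDef := by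
  refine PosDef.of_dotProduct_mulVec_pos hX.1 (fun x hx => ?_)
  have hinj := Matrix.mulVec_injective_iff_isUnit.mpr ((Matrix.isUnit_iff_isUnit_det X).mpr h)
  have h0 : X *ᵥ x ≠ 0 := by
    intro hc
    exact hx (hinj (by simpa using hc))
  have := (hX.dotProduct_mulVec_zero_iff x).not.mpr h0
  exact lt_of_le_of_ne (hX.dotProduct_mulVec_nonneg x) (Ne.symm this)

lemma posDef_conj {ι : Type*} [Fintype ι] [DecidableEq ι]
    {N A : Matrix ι ι ℝ} (hA : A.PosDef) (hN : IsUnit N.det) :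
    (N * A * Nᵀ).PosDef := by
  have hH : (N * A * Nᵀ).IsHermitian := by
    have h := hA.1.eq
    unfold Matrix.IsHermitian
    rw [conjTranspose_mul, conjTranspose_mul, h, conjTranspose_eq_transpose_of_trivial,
      conjTranspose_eq_transpose_of_trivial, transpose_transpose, mul_assoc]
  refine PosDef.of_dotProduct_mulVec_pos hH (fun x hx => ?_)
  have hinj := Matrix.mulVec_injective_iff_isUnit.mpr
    ((Matrix.isUnit_iff_isUnit_det Nᵀ).mpr (by simpa [Matrix.det_transpose] using hN))
  have h1 : Nᵀ *ᵥ x ≠ 0 := fun hc => hx (hinj (by simpa using hc))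
  have key : star x ⬝ᵥ (N * A * Nᵀ) *ᵥ x
      = star (Nᵀ *ᵥ x) ⬝ᵥ (A *ᵥ (Nᵀ *ᵥ x)) := by
    rw [← mulVec_mulVec, ← mulVec_mulVec, dotProduct_mulVec]
    simp [Matrix.vecMul_transpose, Matrix.mulVec_transpose]
  rw [key]
  exact hA.dotProduct_mulVec_pos h1

lemma posDef_toBlocks₁₁ {a b : Type*} [Fintype a] [Fintype b] [DecidableEq a] [DecidableEq b]
    {Q : Matrix (a ⊕ b) (a ⊕ b) ℝ} (hQ : Q.PosDef) : Q.toBlocks₁₁.PosDef := by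
  refine PosDef.of_dotProduct_mulVec_pos ?_ (fun x hx => ?_)
  · ext i j
    simpa [toBlocks₁₁] using congrFun (congrFun hQ.1.eq (Sum.inl i)) (Sum.inl j)
  · have hy : (Sum.elim x 0 : a ⊕ b → ℝ) ≠ 0 := by
      intro hc; apply hx; ext i; exact congrFun hc (Sum.inl i)
    have h2 := hQ.dotProduct_mulVec_pos hy
    have : star (Sum.elim x 0) ⬝ᵥ Q *ᵥ (Sum.elim x 0) = star x ⬝ᵥ Q.toBlocks₁₁ *ᵥ x := by
      simp [dotProduct, mulVec, Fintype.sum_sum_type, toBlocks₁₁]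
    rwa [this] at h2

lemma posDef_toBlocks₂₂ {a b : Type*} [Fintype a] [Fintype b] [DecidableEq a] [DecidableEq b]
    {Q : Matrix (a ⊕ b) (a ⊕ b) ℝ} (hQ : Q.PosDef) : Q.toBlocks₂₂.PosDef := by
  refine PosDef.of_dotProduct_mulVec_pos ?_ (fun x hx => ?_)
  · ext i j
    simpa [toBlocks₂₂] using congrFun (congrFun hQ.1.eq (Sum.inr i)) (Sum.inr j)
  · have hy : (Sum.elim 0 x : a ⊕ b → ℝ) ≠ 0 := by
      intro hc; apply hx; ext i; exact congrFun hc (Sum.inr i)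
    have h2 := hQ.dotProduct_mulVec_pos hy
    have : star (Sum.elim 0 x) ⬝ᵥ Q *ᵥ (Sum.elim 0 x) = star x ⬝ᵥ Q.toBlocks₂₂ *ᵥ x := by
      simp [dotProduct, mulVec, Fintype.sum_sum_type, toBlocks₂₂]
    rwa [this] at h2

lemma trace_fromBlocks {a b : Type*} [Fintype a] [Fintype b]
    (A : Matrix a a ℝ) (B : Matrix a b ℝ) (C : Matrix b a ℝ) (D : Matrix b b ℝ) :
    (fromBlocks A B C D).trace = A.trace + D.trace := by
  simp [Matrix.trace, Fintype.sum_sum_type, fromBlocks, Matrix.diag]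

open scoped MatrixOrder in
lemma trace_mul_psd_nonneg {ι : Type*} [Fintype ι] [DecidableEq ι]
    {P N : Matrix ι ι ℝ} (hP : P.PosSemidef) (hN : N.PosSemidef) :
    0 ≤ (P * N).trace := by
  obtain ⟨B, hB⟩ : ∃ B : Matrix ι ι ℝ, N = Bᴴ * B := CStarAlgebra.nonneg_iff_eq_star_mul_self.mp hN.nonneg
  obtain ⟨C, hC⟩ : ∃ C : Matrix ι ι ℝ, P = Cᴴ * C := CStarAlgebra.nonneg_iff_eq_star_mul_self.mp hP.nonneg
  rw [hB, hC]
  have h1 : Cᴴ * C * (Bᴴ * B) = Cᴴ * ((C * Bᴴ) * B) := by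
    simp only [mul_assoc]
  rw [h1, trace_mul_comm]
  have h2 : C * Bᴴ * B * Cᴴ = (C * Bᴴ) * (C * Bᴴ)ᴴ := by
    rw [conjTranspose_mul, conjTranspose_conjTranspose, mul_assoc]
  rw [h2]
  set X := C * Bᴴ
  simp only [Matrix.trace, Matrix.diag, Matrix.mul_apply, conjTranspose_apply, star_trivial]
  apply Finset.sum_nonneg; intro i _
  apply Finset.sum_nonneg; intro j _
  exact mul_self_nonneg _
open scoped MatrixOrder in
lemma logDet_basic {ι : Type*} [Fintype ι] [DecidableEq ι]
    {S T : Matrix ι ι ℝ} (hS : S.PosDef) (hT : T.PosDef) :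
    Real.log S.det - Real.log T.det + (Fintype.card ι : ℝ) ≤ (T⁻¹ * S).trace := by
  classical
  set R := CFC.sqrt T with hRdef
  have hRpsd : R.PosSemidef := (CFC.sqrt_nonneg T).posSemidef
  have hRR : R * R = T := CFC.sqrt_mul_sqrt_self T hT.posSemidef.nonneg
  have hdetRR : R.det * R.det = T.det := by rw [← det_mul, hRR]
  have hdetT : 0 < T.det := hT.det_pos
  have hdetRne : R.det ≠ 0 := by
    intro hc; rw [hc, mul_zero] at hdetRR; exact hdetT.ne (by linarith)
  have hRt : Rᵀ = R := by
    have := hRpsd.1.eq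
    rwa [conjTranspose_eq_transpose_of_trivial] at this
  have hRsym : R⁻¹ᵀ = R⁻¹ := by rw [transpose_nonsing_inv, hRt]
  have hdetRinv : R⁻¹.det = R.det⁻¹ := by rw [det_nonsing_inv]; simp
  set X := R⁻¹ * S * R⁻¹ with hXdef
  have hXpd : X.PosDef := by
    have := posDef_conj (N := R⁻¹) hS (by simp [hdetRinv, hdetRne])
    rwa [hRsym] at this
  have htr : (T⁻¹ * S).trace = X.trace := by
    rw [← hRR, Matrix.mul_inv_rev, mul_assoc, trace_mul_comm, hXdef, mul_assoc]
  have hdetX : X.det = S.det / T.det := by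
    rw [hXdef, det_mul, det_mul, hdetRinv, ← hdetRR]
    field_simp
  have hher := hXpd.1
  have heig : ∀ i, 0 < hher.eigenvalues i := hXpd.eigenvalues_pos
  have hprod : X.det = ∏ i, hher.eigenvalues i := by
    have := hher.det_eq_prod_eigenvalues
    simpa using this
  have hsum : X.trace = ∑ i, hher.eigenvalues i := trace_eq_sum_eig hher
  have hlog : Real.log X.det = ∑ i, Real.log (hher.eigenvalues i) := by
    rw [hprod, Real.log_prod]
    intro i _; exact (heig i).ne'
  have hle : ∀ i, Real.log (hher.eigenvalues i) ≤ hher.eigenvalues i - 1 :=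
    fun i => Real.log_le_sub_one_of_pos (heig i)
  have hsumle : Real.log X.det ≤ X.trace - Fintype.card ι := by
    rw [hlog, hsum]
    have := Finset.sum_le_sum (fun i (_ : i ∈ Finset.univ) => hle i)
    simpa [Finset.sum_sub_distrib, Finset.card_univ] using this
  have hlogX : Real.log X.det = Real.log S.det - Real.log T.det := by
    rw [hdetX, Real.log_div hS.det_pos.ne' hdetT.ne']
  rw [htr]
  linarith [hsumle, hlogX.symm.le]

noncomputable def logDetDiv {n : Type*} [Fintype n] [DecidableEq n]
    (Q M : Matrix n n ℝ) : ℝ :=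
  (1 / 2) * (Real.log M.det - Real.log Q.det + (M⁻¹ * (Q - M)).trace)

lemma logDetDiv_eq {n : Type*} [Fintype n] [DecidableEq n]
    {Q M : Matrix n n ℝ} (hM : M.PosDef) :
    logDetDiv Q M = (1 / 2) * (Real.log M.det - Real.log Q.det +
      ((M⁻¹ * Q).trace - Fintype.card n)) := by
  unfold logDetDiv
  rw [mul_sub, trace_sub, Matrix.nonsing_inv_mul M hM.det_pos.ne'.isUnit, trace_one]

theorem key {a b : Type*} [Fintype a] [Fintype b] [DecidableEq a] [DecidableEq b]
    (Q M : Matrix (a ⊕ b) (a ⊕ b) ℝ)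
    (hQ : Q.PosDef) (hM : M.PosDef) :
    logDetDiv Q.toBlocks₁₁ M.toBlocks₁₁ ≤ logDetDiv Q M := by
  classical
  set A := Q.toBlocks₁₁ with hAdef
  set E := M.toBlocks₁₁ with hEdef
  set F := M.toBlocks₁₂ with hFdef
  set G := M.toBlocks₂₂ with hGdef
  have hA : A.PosDef := posDef_toBlocks₁₁ hQ
  have hE : E.PosDef := posDef_toBlocks₁₁ hM
  have hM21 : M.toBlocks₂₁ = Fᵀ := by
    ext i j
    simpa [toBlocks₂₁, hFdef, toBlocks₁₂] using (congrFun (congrFun hM.1.eq (Sum.inr i)) (Sum.inl j)).symm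
  have hMeq : M = fromBlocks E F Fᵀ G := by
    rw [← fromBlocks_toBlocks M, hM21]
  have hEt : Eᵀ = E := by
    have := hE.1.eq
    rwa [conjTranspose_eq_transpose_of_trivial] at this
  have hEinv : E⁻¹ * E = 1 := Matrix.nonsing_inv_mul E hE.det_pos.ne'.isUnit
  have hEinv' : E * E⁻¹ = 1 := Matrix.mul_nonsing_inv E hE.det_pos.ne'.isUnit
  have hEit : E⁻¹ᵀ = E⁻¹ := by rw [transpose_nonsing_inv, hEt]
  set L : Matrix (a ⊕ b) (a ⊕ b) ℝ := fromBlocks 1 0 (-(Fᵀ * E⁻¹)) 1 with hLdef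
  have hdetL : L.det = 1 := by
    rw [hLdef, det_fromBlocks_zero₁₂, det_one, det_one, one_mul]
  have hL : IsUnit L.det := by rw [hdetL]; exact isUnit_one
  have hLt : IsUnit Lᵀ.det := by rwa [det_transpose]
  set Q' := L * Q * Lᵀ with hQ'def
  set M' := L * M * Lᵀ with hM'def
  have hQ'pd : Q'.PosDef := posDef_conj hQ hL
  have hM'pd : M'.PosDef := posDef_conj hM hL
  set T := G - Fᵀ * E⁻¹ * F with hTdef
  have hLtEq : Lᵀ = fromBlocks 1 (-(E⁻¹ * F)) 0 1 := by
    rw [hLdef, fromBlocks_transpose]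
    simp [transpose_neg, transpose_mul, hEit]
  -- computation of M'
  have hM'eq : M' = fromBlocks E 0 0 T := by
    rw [hM'def, hMeq, hLtEq, hLdef, fromBlocks_multiply, fromBlocks_multiply]
    rw [fromBlocks_inj]
    simp only [Matrix.one_mul, Matrix.mul_one, Matrix.zero_mul, Matrix.mul_zero, add_zero,
      zero_add, Matrix.neg_mul, Matrix.mul_neg, neg_neg]
    refine ⟨by simp, ?_, ?_, ?_⟩
    · rw [← Matrix.mul_assoc E E⁻¹ F, hEinv', Matrix.one_mul, neg_add_cancel]
    · rw [Matrix.mul_assoc Fᵀ E⁻¹ E, hEinv, Matrix.mul_one, neg_add_cancel]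
    · rw [Matrix.mul_assoc Fᵀ E⁻¹ E, hEinv, Matrix.mul_one, neg_add_cancel,
        Matrix.zero_mul, neg_zero, zero_add, hTdef, sub_eq_neg_add]
  -- T is positive definite
  have hT : T.PosDef := by
    have h := posDef_toBlocks₂₂ hM'pd
    rwa [hM'eq, toBlocks_fromBlocks₂₂] at h
  -- Q' block structure
  have hQ'11 : Q'.toBlocks₁₁ = A := by
    rw [hQ'def, hLdef, hLtEq]
    nth_rewrite 1 [← fromBlocks_toBlocks Q]
    rw [fromBlocks_multiply, fromBlocks_multiply, toBlocks_fromBlocks₁₁]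
    simp [hAdef]
  set B' := Q'.toBlocks₁₂ with hB'def
  set D' := Q'.toBlocks₂₂ with hD'def
  have hQ'21 : Q'.toBlocks₂₁ = B'ᵀ := by
    ext i j
    simpa [toBlocks₂₁, hB'def, toBlocks₁₂] using (congrFun (congrFun hQ'pd.1.eq (Sum.inr i)) (Sum.inl j)).symm
  have hQ'eq : Q' = fromBlocks A B' B'ᵀ D' := by
    conv_lhs => rw [← fromBlocks_toBlocks Q']
    rw [hQ'11, hQ'21]
  haveI : Invertible A := A.invertibleOfIsUnitDet hA.det_pos.ne'.isUnit
  have hB'H : B'ᴴ = B'ᵀ := conjTranspose_eq_transpose_of_trivial _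
  set S' := D' - B'ᴴ * A⁻¹ * B' with hS'def
  have hS'psd : S'.PosSemidef := by
    rw [hS'def]
    refine (PosDef.fromBlocks₁₁ B' D' hA).mp ?_
    rw [hB'H, ← hQ'eq]
    exact hQ'pd.posSemidef
  have hdetQ'A : Q'.det = A.det * S'.det := by
    rw [hQ'eq, det_fromBlocks₁₁, invOf_eq_nonsing_inv, hS'def, hB'H]
  have hdetQ'Q : Q'.det = Q.det := by
    rw [hQ'def, det_mul, det_mul, hdetL, det_transpose, hdetL, one_mul, mul_one]
  have hdetM'M : M'.det = M.det := by
    rw [hM'def, det_mul, det_mul, hdetL, det_transpose, hdetL, one_mul, mul_one]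
  have hS'detpos : 0 < S'.det := by
    have h : S'.det = Q'.det / A.det := by
      rw [hdetQ'A, mul_comm, mul_div_assoc, div_self hA.det_pos.ne', mul_one]
    rw [h, hdetQ'Q]
    exact div_pos hQ.det_pos hA.det_pos
  have hS' : S'.PosDef := posDef_of_psd_unit_det hS'psd hS'detpos.ne'.isUnit
  have hdetMET : M.det = E.det * T.det := by
    rw [← hdetM'M, hM'eq, det_fromBlocks_zero₂₁]
  -- inverse of M'
  have hTinv : T⁻¹ * T = 1 := Matrix.nonsing_inv_mul T hT.det_pos.ne'.isUnit
  have hM'inv : M'⁻¹ = fromBlocks E⁻¹ 0 0 T⁻¹ := by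
    apply Matrix.inv_eq_left_inv
    rw [hM'eq, fromBlocks_multiply]
    simp [hEinv, hTinv, fromBlocks_one]
  -- trace identities
  have htr1 : (M'⁻¹ * Q').trace = (E⁻¹ * A).trace + (T⁻¹ * D').trace := by
    rw [hM'inv, hQ'eq, fromBlocks_multiply, trace_fromBlocks]
    simp
  have hLinv : L⁻¹ * L = 1 := Matrix.nonsing_inv_mul L hL
  have hLtinv : Lᵀ * Lᵀ⁻¹ = 1 := Matrix.mul_nonsing_inv Lᵀ hLt
  have htr2 : (M'⁻¹ * Q').trace = (M⁻¹ * Q).trace := by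
    have e1 : M'⁻¹ * Q' = Lᵀ⁻¹ * (M⁻¹ * (Q * Lᵀ)) := by
      rw [hM'def, hQ'def, Matrix.mul_inv_rev, Matrix.mul_inv_rev]
      simp only [Matrix.mul_assoc]
      rw [← Matrix.mul_assoc L⁻¹ L (Q * Lᵀ), hLinv, Matrix.one_mul]
    rw [e1, trace_mul_comm]
    simp only [Matrix.mul_assoc]
    rw [hLtinv, Matrix.mul_one]
  have hD'dec : D' = S' + B'ᴴ * A⁻¹ * B' := by rw [hS'def, sub_add_cancel]
  have htr3 : (T⁻¹ * D').trace = (T⁻¹ * S').trace + (T⁻¹ * (B'ᴴ * A⁻¹ * B')).trace := by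
    rw [hD'dec, Matrix.mul_add, trace_add]
  have hextra : 0 ≤ (T⁻¹ * (B'ᴴ * A⁻¹ * B')).trace :=
    trace_mul_psd_nonneg hT.inv.posSemidef (hA.inv.posSemidef.conjTranspose_mul_mul_same B')
  -- log identities
  have hlogM : Real.log M.det = Real.log E.det + Real.log T.det := by
    rw [hdetMET, Real.log_mul hE.det_pos.ne' hT.det_pos.ne']
  have hlogQ : Real.log Q.det = Real.log A.det + Real.log S'.det := by
    rw [← hdetQ'Q, hdetQ'A, Real.log_mul hA.det_pos.ne' hS'detpos.ne']
  have hbasic := logDet_basic hS' hT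
  have hcard : (Fintype.card (a ⊕ b) : ℝ) = Fintype.card a + Fintype.card b := by
    rw [Fintype.card_sum]; push_cast; ring
  rw [logDetDiv_eq hE, logDetDiv_eq hM]
  rw [← htr2, htr1, htr3, hlogM, hlogQ, hcard]
  linarith
theorem logDetDiv_ge_logDetDiv_principal_submatrix {n m : ℕ}
    (Q M : Matrix (Fin n ⊕ Fin m) (Fin n ⊕ Fin m) ℝ)
    (hQ : Q.PosDef) (hM : M.PosDef) :
    logDetDiv Q.toBlocks₁₁ M.toBlocks₁₁ ≤ logDetDiv Q M := by
  exact key Q M hQ hM
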